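/- For the dispersion function F(ω) = ω²(1 + Σ_{j=1}^N ε_j/(1 − ω t_j)) + ω_s², with distinct positive stopping times t_1 < t_2 < ··· < t_N, positive ε_j, and ω_s > 0: F is positive on (0, min_j t_j^{-1}); F(ω) → ∓∞ as ω → t_j^{-1}± (one-sided limits change sign across each pole); and F(ω) → +∞ as ω → +∞. Consequently the associated polynomial P̃(ω) = ω²(∏_j(1 − ω t_j) + Σ_j ε_j ∏_{p≠j}(1 − ω t_p)) + ω_s² ∏_j(1 − ω t_j) has at least N distinct real positive roots, one in each interval (t_{j+1}^{-1}, t_j^{-1}) for j = 1,…,N−1 and one in (t_1^{-1}, ∞). -/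

import Mathlib

open Finset Filter Topology

private lemma aux_ivt {f : ℝ → ℝ} (hf : Continuous f) {a b : ℝ} (hab : a < b)
    (hsign : f a * f b < 0) : ∃ x, a < x ∧ x < b ∧ f x = 0 := by
  rcases lt_or_ge (f a) 0 with ha | ha
  · have hb : 0 < f b := by nlinarith
    obtain ⟨x, hx, hfx⟩ := intermediate_value_Ioo hab.le hf.continuousOn
      (Set.mem_Ioo.mpr ⟨ha, hb⟩)
    exact ⟨x, hx.1, hx.2, hfx⟩
  · have ha' : 0 < f a := by
      rcases eq_or_lt_of_le ha with h | h
      · rw [← h, zero_mul] at hsign; exact absurd hsign (lt_irrefl 0)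
      · exact h
    have hb : f b < 0 := by nlinarith
    obtain ⟨x, hx, hfx⟩ := intermediate_value_Ioo' hab.le hf.continuousOn
      (Set.mem_Ioo.mpr ⟨hb, ha'⟩)
    exact ⟨x, hx.1, hx.2, hfx⟩

private lemma aux_prod_neg {α : Type*} (s : Finset α) (g : α → ℝ) :
    ∏ p ∈ s, g p = (-1 : ℝ) ^ s.card * ∏ p ∈ s, (-g p) := by
  rw [← Finset.prod_const, ← Finset.prod_mul_distrib]
  exact Finset.prod_congr rfl fun p _ => by ring

theorem dispersion_function_sign_changes_and_roots (N : ℕ) (hN : 0 < N)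
    (t ε : Fin N → ℝ) (ht : ∀ j, 0 < t j) (htmono : StrictMono t)
    (hε : ∀ j, 0 < ε j) (ωs : ℝ) (hωs : 0 < ωs)
    (F P : ℝ → ℝ)
    (hF : ∀ ω, F ω = ω ^ 2 * (1 + ∑ j : Fin N, ε j / (1 - ω * t j)) + ωs ^ 2)
    (hP : ∀ ω, P ω = ω ^ 2 * (∏ j : Fin N, (1 - ω * t j) +
        ∑ j : Fin N, ε j * ∏ p ∈ Finset.univ.erase j, (1 - ω * t p)) +
      ωs ^ 2 * ∏ j : Fin N, (1 - ω * t j)) :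
    -- F is positive on (0, min_j t_j⁻¹)
    (∀ ω, 0 < ω → (∀ j, ω < (t j)⁻¹) → 0 < F ω) ∧
    -- one-sided limits at each pole: F → +∞ from the left, F → -∞ from the right
    (∀ j, Tendsto F (𝓝[<] (t j)⁻¹) atTop) ∧
    (∀ j, Tendsto F (𝓝[>] (t j)⁻¹) atBot) ∧
    -- F → +∞ at +∞
    Tendsto F atTop atTop ∧
    -- one real positive root of P̃ in each interval between consecutive poles
    (∀ j : Fin N, ∀ hj : j.val + 1 < N,
      ∃ ω, (t ⟨j.val + 1, hj⟩)⁻¹ < ω ∧ ω < (t j)⁻¹ ∧ P ω = 0) ∧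
    -- one real positive root beyond the largest pole (t_1)⁻¹
    (∃ ω, (t ⟨0, hN⟩)⁻¹ < ω ∧ P ω = 0) := by
  have htne : ∀ j, t j ≠ 0 := fun j => (ht j).ne'
  have htinv : ∀ j, 0 < (t j)⁻¹ := fun j => inv_pos.2 (ht j)
  have hinjt : Function.Injective t := htmono.injective
  have hfac_pos : ∀ {j : Fin N} {ω : ℝ}, ω < (t j)⁻¹ → 0 < 1 - ω * t j := by
    intro j ω hω
    have h := mul_lt_mul_of_pos_right hω (ht j)
    rw [inv_mul_cancel₀ (htne j)] at h
    linarith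
  have hfac_neg : ∀ {j : Fin N} {ω : ℝ}, (t j)⁻¹ < ω → 1 - ω * t j < 0 := by
    intro j ω hω
    have h := mul_lt_mul_of_pos_right hω (ht j)
    rw [inv_mul_cancel₀ (htne j)] at h
    linarith
  have hne : ∀ j k : Fin N, k ≠ j → 1 - (t j)⁻¹ * t k ≠ 0 := by
    intro j k hkj h
    apply hkj
    have h1 : (t j)⁻¹ * t k = 1 := by linarith
    have h2 : t j * ((t j)⁻¹ * t k) = t j * 1 := by rw [h1]
    rw [← mul_assoc, mul_inv_cancel₀ (htne j), one_mul, mul_one] at h2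
    exact hinjt h2
  -- Part 1
  have part1 : ∀ ω, 0 < ω → (∀ j, ω < (t j)⁻¹) → 0 < F ω := by
    intro ω hω hlt
    rw [hF]
    have hsum : 0 ≤ ∑ j : Fin N, ε j / (1 - ω * t j) :=
      Finset.sum_nonneg fun j _ => le_of_lt (div_pos (hε j) (hfac_pos (hlt j)))
    have hm : 0 < ω ^ 2 * (1 + ∑ j : Fin N, ε j / (1 - ω * t j)) :=
      mul_pos (pow_pos hω 2) (by linarith)
    have := pow_pos hωs 2
    linarith
  -- decomposition isolating the pole at t j
  have hsplit : ∀ (j : Fin N) (ω : ℝ),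
      F ω = (ω ^ 2 * (1 + ∑ k ∈ Finset.univ.erase j, ε k / (1 - ω * t k)) + ωs ^ 2)
            + (ω ^ 2 * ε j) * (1 - ω * t j)⁻¹ := by
    intro j ω
    rw [hF, ← Finset.add_sum_erase _ _ (Finset.mem_univ j)]
    simp only [div_eq_mul_inv]
    ring
  have hGcont : ∀ j : Fin N,
      Tendsto (fun ω => ω ^ 2 * (1 + ∑ k ∈ Finset.univ.erase j, ε k / (1 - ω * t k)) + ωs ^ 2)
        (𝓝 ((t j)⁻¹))
        (𝓝 ((t j)⁻¹ ^ 2 * (1 + ∑ k ∈ Finset.univ.erase j, ε k / (1 - (t j)⁻¹ * t k)) + ωs ^ 2)) := by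
    intro j
    refine Tendsto.add (Tendsto.mul ?_ (Tendsto.add tendsto_const_nhds ?_)) tendsto_const_nhds
    · exact (continuous_pow 2).tendsto _
    · refine tendsto_finset_sum _ fun k hk => ?_
      exact Tendsto.div tendsto_const_nhds
        ((by fun_prop : Continuous fun ω : ℝ => 1 - ω * t k).tendsto _)
        (hne j k (Finset.ne_of_mem_erase hk))
  have hleft : ∀ j : Fin N, Tendsto (fun ω => (1 - ω * t j)⁻¹) (𝓝[<] (t j)⁻¹) atTop := by
    intro j
    apply tendsto_inv_nhdsGT_zero.comp
    apply tendsto_nhdsWithin_of_tendsto_nhds_of_eventually_within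
    · have h : Tendsto (fun ω => 1 - ω * t j) (𝓝 ((t j)⁻¹)) (𝓝 (1 - (t j)⁻¹ * t j)) :=
        Continuous.tendsto (by fun_prop) _
      rw [inv_mul_cancel₀ (htne j), sub_self] at h
      exact h.mono_left nhdsWithin_le_nhds
    · filter_upwards [self_mem_nhdsWithin] with ω hω
      exact Set.mem_Ioi.mpr (hfac_pos hω)
  have part2 : ∀ j, Tendsto F (𝓝[<] (t j)⁻¹) atTop := by
    intro j
    have hH : Tendsto (fun ω => (ω ^ 2 * ε j) * (1 - ω * t j)⁻¹) (𝓝[<] (t j)⁻¹) atTop := by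
      refine Filter.Tendsto.pos_mul_atTop (C := (t j)⁻¹ ^ 2 * ε j)
        (mul_pos (pow_pos (htinv j) 2) (hε j)) ?_ (hleft j)
      exact ((by fun_prop : Continuous fun ω : ℝ => ω ^ 2 * ε j).tendsto _).mono_left
        nhdsWithin_le_nhds
    have h := (((hGcont j).mono_left nhdsWithin_le_nhds).add_atTop hH)
    exact h.congr fun ω => (hsplit j ω).symm
  have hright : ∀ j : Fin N, Tendsto (fun ω => (1 - ω * t j)⁻¹) (𝓝[>] (t j)⁻¹) atBot := by
    intro j
    have h1 : Tendsto (fun ω => (ω * t j - 1)⁻¹) (𝓝[>] (t j)⁻¹) atTop := by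
      apply tendsto_inv_nhdsGT_zero.comp
      apply tendsto_nhdsWithin_of_tendsto_nhds_of_eventually_within
      · have h : Tendsto (fun ω => ω * t j - 1) (𝓝 ((t j)⁻¹)) (𝓝 ((t j)⁻¹ * t j - 1)) :=
          Continuous.tendsto (by fun_prop) _
        rw [inv_mul_cancel₀ (htne j), sub_self] at h
        exact h.mono_left nhdsWithin_le_nhds
      · filter_upwards [self_mem_nhdsWithin] with ω hω
        have := hfac_neg hω
        exact Set.mem_Ioi.mpr (by linarith)
    have h2 := tendsto_neg_atTop_atBot.comp h1
    refine h2.congr fun ω => ?_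
    show -((ω * t j - 1)⁻¹) = (1 - ω * t j)⁻¹
    rw [show (1 - ω * t j) = -(ω * t j - 1) by ring, inv_neg]
  have part3 : ∀ j, Tendsto F (𝓝[>] (t j)⁻¹) atBot := by
    intro j
    have hH : Tendsto (fun ω => (ω ^ 2 * ε j) * (1 - ω * t j)⁻¹) (𝓝[>] (t j)⁻¹) atBot := by
      refine Filter.Tendsto.pos_mul_atBot (C := (t j)⁻¹ ^ 2 * ε j)
        (mul_pos (pow_pos (htinv j) 2) (hε j)) ?_ (hright j)
      exact ((by fun_prop : Continuous fun ω : ℝ => ω ^ 2 * ε j).tendsto _).mono_left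
        nhdsWithin_le_nhds
    have h := (((hGcont j).mono_left nhdsWithin_le_nhds).add_atBot hH)
    exact h.congr fun ω => (hsplit j ω).symm
  -- Part 4
  have hterm0 : ∀ k : Fin N, Tendsto (fun ω => ε k / (1 - ω * t k)) atTop (𝓝 0) := by
    intro k
    have h1 : Tendsto (fun ω : ℝ => ω * t k - 1) atTop atTop := by
      have := Filter.Tendsto.atTop_mul_const (ht k) (tendsto_id (α := ℝ))
      have h2 := tendsto_atTop_add_const_right atTop (-1 : ℝ) this
      exact h2.congr fun ω => by simp only [id_eq]; ring
    have h2 := Filter.Tendsto.div_atTop (tendsto_const_nhds (α := ℝ) (x := ε k)) h1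
    have h3 := h2.neg
    rw [neg_zero] at h3
    refine h3.congr fun ω => ?_
    show -(ε k / (ω * t k - 1)) = ε k / (1 - ω * t k)
    rw [show (1 - ω * t k) = -(ω * t k - 1) by ring, div_neg]
  have part4 : Tendsto F atTop atTop := by
    have h0 : Tendsto (fun ω => ∑ k : Fin N, ε k / (1 - ω * t k)) atTop
        (𝓝 (∑ _k : Fin N, (0 : ℝ))) := tendsto_finset_sum _ fun k _ => hterm0 k
    rw [Finset.sum_const, smul_zero] at h0
    have hsum : Tendsto (fun ω => 1 + ∑ k : Fin N, ε k / (1 - ω * t k)) atTop (𝓝 1) := by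
      simpa using tendsto_const_nhds.add h0
    have hsq : Tendsto (fun ω : ℝ => ω ^ 2) atTop atTop := tendsto_pow_atTop two_ne_zero
    have hmul := hsq.atTop_mul_pos one_pos hsum
    have hfin := tendsto_atTop_add_const_right atTop (ωs ^ 2) hmul
    exact hfin.congr fun ω => (hF ω).symm
  -- key identity
  have hkey : ∀ ω : ℝ, (∀ p, 1 - ω * t p ≠ 0) →
      P ω = F ω * ∏ p : Fin N, (1 - ω * t p) := by
    intro ω hω
    have hS : (∑ j : Fin N, ε j / (1 - ω * t j)) * ∏ p : Fin N, (1 - ω * t p)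
        = ∑ j : Fin N, ε j * ∏ p ∈ Finset.univ.erase j, (1 - ω * t p) := by
      rw [Finset.sum_mul]
      refine Finset.sum_congr rfl fun j _ => ?_
      rw [← Finset.mul_prod_erase Finset.univ _ (Finset.mem_univ j), div_mul_eq_mul_div,
        mul_comm (1 - ω * t j) _, mul_div_assoc, mul_div_assoc, div_self (hω j), mul_one]
    rw [hP ω, hF ω, ← hS]
    ring
  -- value at poles
  have hPval : ∀ j : Fin N, P (t j)⁻¹
      = (t j)⁻¹ ^ 2 * (ε j * ∏ p ∈ Finset.univ.erase j, (1 - (t j)⁻¹ * t p)) := by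
    intro j
    have h0 : 1 - (t j)⁻¹ * t j = 0 := by rw [inv_mul_cancel₀ (htne j), sub_self]
    have hprod0 : ∏ p : Fin N, (1 - (t j)⁻¹ * t p) = 0 :=
      Finset.prod_eq_zero (Finset.mem_univ j) h0
    have hsum : (∑ k : Fin N, ε k * ∏ p ∈ Finset.univ.erase k, (1 - (t j)⁻¹ * t p))
        = ε j * ∏ p ∈ Finset.univ.erase j, (1 - (t j)⁻¹ * t p) := by
      refine Finset.sum_eq_single j (fun k _ hkj => ?_) (fun h => absurd (Finset.mem_univ j) h)
      rw [Finset.prod_eq_zero (Finset.mem_erase.mpr ⟨hkj.symm, Finset.mem_univ j⟩) h0, mul_zero]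
    rw [hP, hprod0, hsum]
    ring
  -- sign of P at each pole
  have hsign : ∀ j : Fin N, ∃ c : ℝ, 0 < c ∧
      P (t j)⁻¹ = (-1 : ℝ) ^ (N - 1 - j.val) * c := by
    intro j
    have hQ : ∏ p ∈ Finset.univ.erase j, (1 - (t j)⁻¹ * t p)
        = (∏ p ∈ (Finset.univ.erase j).filter (fun p => j < p), (1 - (t j)⁻¹ * t p))
          * ∏ p ∈ (Finset.univ.erase j).filter (fun p => ¬ j < p), (1 - (t j)⁻¹ * t p) :=
      (Finset.prod_filter_mul_prod_filter_not _ _ _).symm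
    have hfilter : (Finset.univ.erase j).filter (fun p => j < p) = Finset.Ioi j := by
      ext p
      simp only [Finset.mem_filter, Finset.mem_erase, Finset.mem_univ, and_true, true_and,
        Finset.mem_Ioi]
      exact ⟨fun h => h.2, fun h => ⟨h.ne', h⟩⟩
    have hApos : 0 < ∏ p ∈ (Finset.univ.erase j).filter (fun p => j < p),
        -(1 - (t j)⁻¹ * t p) := by
      refine Finset.prod_pos fun p hp => ?_
      simp only [Finset.mem_filter, Finset.mem_erase] at hp
      have h1 : t j < t p := htmono hp.2
      have h2 : (1 : ℝ) < (t j)⁻¹ * t p := by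
        calc (1 : ℝ) = (t j)⁻¹ * t j := (inv_mul_cancel₀ (htne j)).symm
        _ < (t j)⁻¹ * t p := mul_lt_mul_of_pos_left h1 (htinv j)
      linarith
    have hBpos : 0 < ∏ p ∈ (Finset.univ.erase j).filter (fun p => ¬ j < p),
        (1 - (t j)⁻¹ * t p) := by
      refine Finset.prod_pos fun p hp => ?_
      simp only [Finset.mem_filter, Finset.mem_erase] at hp
      have hpj : p < j := lt_of_le_of_ne (not_lt.mp hp.2) hp.1.1
      have h1 : t p < t j := htmono hpj
      have h2 : (t j)⁻¹ * t p < 1 := by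
        calc (t j)⁻¹ * t p < (t j)⁻¹ * t j := mul_lt_mul_of_pos_left h1 (htinv j)
        _ = 1 := inv_mul_cancel₀ (htne j)
      linarith
    refine ⟨(t j)⁻¹ ^ 2 * (ε j * ((∏ p ∈ (Finset.univ.erase j).filter (fun p => j < p),
        -(1 - (t j)⁻¹ * t p)) * ∏ p ∈ (Finset.univ.erase j).filter (fun p => ¬ j < p),
        (1 - (t j)⁻¹ * t p))),
      mul_pos (pow_pos (htinv j) 2) (mul_pos (hε j) (mul_pos hApos hBpos)), ?_⟩
    have hcard : ((Finset.univ.erase j).filter (fun p => j < p)).card = N - 1 - j.val := by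
      rw [hfilter, Fin.card_Ioi]
    rw [hPval j, hQ, aux_prod_neg ((Finset.univ.erase j).filter (fun p => j < p)), hcard]
    ring
  -- continuity of P
  have hPcont : Continuous P := by
    have hPe : P = fun ω => ω ^ 2 * (∏ j : Fin N, (1 - ω * t j) +
        ∑ j : Fin N, ε j * ∏ p ∈ Finset.univ.erase j, (1 - ω * t p)) +
      ωs ^ 2 * ∏ j : Fin N, (1 - ω * t j) := funext hP
    rw [hPe]
    refine Continuous.add (Continuous.mul (by fun_prop) (Continuous.add ?_ ?_))
      (Continuous.mul continuous_const ?_)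
    · exact continuous_finset_prod _ fun j _ => by fun_prop
    · exact continuous_finset_sum _ fun j _ =>
        Continuous.mul continuous_const (continuous_finset_prod _ fun p _ => by fun_prop)
    · exact continuous_finset_prod _ fun j _ => by fun_prop
  -- roots between consecutive poles
  have part5 : ∀ j : Fin N, ∀ hj : j.val + 1 < N,
      ∃ ω, (t ⟨j.val + 1, hj⟩)⁻¹ < ω ∧ ω < (t j)⁻¹ ∧ P ω = 0 := by
    intro j hj
    set j' : Fin N := ⟨j.val + 1, hj⟩ with hj'def
    have hjj' : j < j' := by
      rw [Fin.lt_def]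
      simp [hj'def]
    have htj : t j < t j' := htmono hjj'
    have hinvlt : (t j')⁻¹ < (t j)⁻¹ := (inv_lt_inv₀ (ht j') (ht j)).mpr htj
    obtain ⟨c, hc, hPc⟩ := hsign j
    obtain ⟨c', hc', hPc'⟩ := hsign j'
    have hj'val : j'.val = j.val + 1 := rfl
    have hparity : N - 1 - j.val = (N - 1 - j'.val) + 1 := by
      rw [hj'val]; omega
    have hprodneg : P (t j')⁻¹ * P (t j)⁻¹ < 0 := by
      have he : ((-1 : ℝ) ^ (N - 1 - j'.val)) * ((-1 : ℝ) ^ (N - 1 - j'.val)) = 1 := by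
        rw [← pow_add]
        exact Even.neg_one_pow ⟨_, rfl⟩
      have hexp : P (t j')⁻¹ * P (t j)⁻¹
          = -((((-1 : ℝ) ^ (N - 1 - j'.val)) * ((-1 : ℝ) ^ (N - 1 - j'.val))) * (c' * c)) := by
        rw [hPc, hPc', hparity, pow_succ]
        ring
      rw [hexp, he, one_mul]
      exact neg_lt_zero.mpr (mul_pos hc' hc)
    obtain ⟨x, h1, h2, h3⟩ := aux_ivt hPcont hinvlt hprodneg
    exact ⟨x, h1, h2, h3⟩
  -- root beyond the largest pole
  have part6 : ∃ ω, (t ⟨0, hN⟩)⁻¹ < ω ∧ P ω = 0 := by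
    obtain ⟨b, hbF, hb0⟩ : ∃ b, 0 < F b ∧ (t ⟨0, hN⟩)⁻¹ < b :=
      ((part4.eventually_gt_atTop 0).and (eventually_gt_atTop (t ⟨0, hN⟩)⁻¹)).exists
    have hballneg : ∀ p : Fin N, 1 - b * t p < 0 := by
      intro p
      have h0p : t ⟨0, hN⟩ ≤ t p := htmono.monotone (by
        rw [Fin.le_def]; exact Nat.zero_le _)
      have hinvle : (t p)⁻¹ ≤ (t ⟨0, hN⟩)⁻¹ :=
        (inv_le_inv₀ (ht p) (ht ⟨0, hN⟩)).mpr h0p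
      exact hfac_neg (lt_of_le_of_lt hinvle hb0)
    have hkb : P b = F b * ∏ p : Fin N, (1 - b * t p) :=
      hkey b fun p => (hballneg p).ne
    have hprodb : ∏ p : Fin N, (1 - b * t p)
        = (-1 : ℝ) ^ N * ∏ p : Fin N, -(1 - b * t p) := by
      have h := aux_prod_neg (Finset.univ : Finset (Fin N)) (fun p => 1 - b * t p)
      simpa [Finset.card_univ] using h
    have hprodbpos : 0 < ∏ p : Fin N, -(1 - b * t p) :=
      Finset.prod_pos fun p _ => by linarith [hballneg p]
    obtain ⟨c, hc, hPc⟩ := hsign ⟨0, hN⟩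
    have hv : (⟨0, hN⟩ : Fin N).val = 0 := rfl
    have hsignprod : P (t ⟨0, hN⟩)⁻¹ * P b < 0 := by
      have h1 : ((-1 : ℝ)) ^ (N - 1 - (⟨0, hN⟩ : Fin N).val) * (-1 : ℝ) ^ N = -1 := by
        rw [hv, ← pow_add, show (N - 1 - 0) + N = 2 * (N - 1) + 1 by omega, pow_succ, pow_mul]
        norm_num
      have hexp : P (t ⟨0, hN⟩)⁻¹ * P b
          = ((-1 : ℝ) ^ (N - 1 - (⟨0, hN⟩ : Fin N).val) * (-1 : ℝ) ^ N)
            * (c * (F b * ∏ p : Fin N, -(1 - b * t p))) := by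
        rw [hPc, hkb, hprodb]
        ring
      rw [hexp, h1]
      have := mul_pos hc (mul_pos hbF hprodbpos)
      linarith
    obtain ⟨x, h1, _h2, h3⟩ := aux_ivt hPcont hb0 hsignprod
    exact ⟨x, h1, h3⟩
  exact ⟨part1, part2, part3, part4, part5, part6⟩
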